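/- (L^1 time-Lipschitz estimate for solutions) Suppose (H1), (H2), (H3) hold with κ = 1, let L > 0, let u be a solution of the coagulation equation with ‖u(·,t)‖_Y ≤ 2L for all t ≥ 0, and let C = 1 if 0 ≤ λ ≤ 1 and C = 2^{2λ−2} if λ > 1. Then for all t, t' ≥ 0: ∫_0^∞ |u(x,t') − u(x,t)| dx ≤ 18 C L² |t' − t|. In particular t ↦ u(·,t) is Lipschitz continuous from [0,∞) into L^1((0,∞)). -/

import Mathlib

open MeasureTheory Set Filter

/-- The weighted norm `‖u‖_Y = ∫_0^∞ (x + x⁻¹)|u(x)| dx`. -/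
noncomputable def Ynorm (u : ℝ → ℝ) : ℝ :=
  ∫ x in Ioi (0:ℝ), (x + x⁻¹) * |u x|

/-- `u ∈ Y⁺`: `u ∈ L¹((0,∞))`, `‖u‖_Y < ∞` and `u ≥ 0` a.e. on `(0,∞)`. -/
def InYplus (u : ℝ → ℝ) : Prop :=
  IntegrableOn u (Ioi (0:ℝ)) volume ∧
  IntegrableOn (fun x => (x + x⁻¹) * |u x|) (Ioi (0:ℝ)) volume ∧
  (∀ᵐ x ∂(volume.restrict (Ioi (0:ℝ))), 0 ≤ u x)

/-- Hypotheses (H1), (H2), (H3) on the coagulation kernel `K`. -/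
structure KernelHyp (K : ℝ → ℝ → ℝ) (κ σ lam : ℝ) : Prop where
  cont : ContinuousOn (Function.uncurry K) (Ioi (0:ℝ) ×ˢ Ioi (0:ℝ))
  nonneg : ∀ ⦃x y : ℝ⦄, 0 < x → 0 < y → 0 ≤ K x y
  symm : ∀ ⦃x y : ℝ⦄, 0 < x → 0 < y → K x y = K y x
  kpos : 0 < κ
  sigma_mem : σ ∈ Icc (0:ℝ) (1/2)
  lam_sub : lam - σ ∈ Ico (0:ℝ) 1
  bound : ∀ ⦃x y : ℝ⦄, 0 < x → 0 < y → K x y ≤ κ * (1 + x + y) ^ lam * (x * y) ^ (-σ)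

/-- The truncated kernel `K_n`. -/
noncomputable def Ktrunc (K : ℝ → ℝ → ℝ) (n : ℕ) (x y : ℝ) : ℝ :=
  if x + y ≤ (n:ℝ) ∧ 1/(n:ℝ) ≤ x ∧ 1/(n:ℝ) ≤ y then K x y else 0

/-- The truncated initial datum `u_0^n`. -/
noncomputable def truncInit (u0 : ℝ → ℝ) (n : ℕ) (x : ℝ) : ℝ :=
  if x ≤ (n:ℝ) then u0 x else 0

/-- `u` is a solution of the truncated problem on `[0,n]` with initial datum `u_0^n`:
for all `t ≥ 0`, `u(·,t) ∈ L¹((0,n))` and for a.e. `x ∈ (0,n)` the truncated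
integral equation holds. -/
def IsTruncSol (K : ℝ → ℝ → ℝ) (u0 : ℝ → ℝ) (n : ℕ) (u : ℝ → ℝ → ℝ) : Prop :=
  (∀ t : ℝ, 0 ≤ t → IntegrableOn (fun x => u x t) (Ioo 0 (n:ℝ)) volume) ∧
  (∀ t : ℝ, 0 ≤ t → ∀ᵐ x ∂(volume.restrict (Ioo 0 (n:ℝ))),
    u x t = truncInit u0 n x + ∫ τ in (0:ℝ)..t,
      ((1/2) * ∫ y in (0:ℝ)..x, Ktrunc K n (x - y) y * u (x - y) τ * u y τ)
      - ∫ y in (0:ℝ)..((n:ℝ) - x), Ktrunc K n x y * u x τ * u y τ)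

/-- Nonnegativity of a truncated solution. -/
def TruncNonneg (n : ℕ) (u : ℝ → ℝ → ℝ) : Prop :=
  ∀ t : ℝ, 0 ≤ t → ∀ᵐ x ∂(volume.restrict (Ioo 0 (n:ℝ))), 0 ≤ u x t

/-- `u` is the zero extension outside `(0,n]`. -/
def ZeroExt (n : ℕ) (u : ℝ → ℝ → ℝ) : Prop :=
  ∀ x t : ℝ, ((n:ℝ) < x ∨ x ≤ 0) → u x t = 0

/-- `u` is a (weak-in-time) solution of the coagulation equation on `[0,∞)`
with initial datum `u0`: `u(·,t) ∈ Y⁺` for all `t ≥ 0`, and for a.e. `x > 0`: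
nonnegativity, continuity in `t`, finiteness of `∫_0^t∫_0^∞ K(x,y)u(y,τ) dy dτ`,
and the integral form of the equation. -/
def IsSol (K : ℝ → ℝ → ℝ) (u0 : ℝ → ℝ) (u : ℝ → ℝ → ℝ) : Prop :=
  (∀ t : ℝ, 0 ≤ t → InYplus (fun x => u x t)) ∧
  (∀ᵐ x ∂(volume.restrict (Ioi (0:ℝ))),
    (∀ t : ℝ, 0 ≤ t → 0 ≤ u x t) ∧
    ContinuousOn (fun t => u x t) (Ici (0:ℝ)) ∧
    (∀ t : ℝ, 0 ≤ t →
      IntegrableOn (fun p : ℝ × ℝ => K x p.2 * u p.2 p.1)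
        (Ioc (0:ℝ) t ×ˢ Ioi (0:ℝ)) volume) ∧
    (∀ t : ℝ, 0 ≤ t →
      u x t = u0 x + ∫ τ in (0:ℝ)..t,
        ((1/2) * ∫ y in (0:ℝ)..x, K (x - y) y * u (x - y) τ * u y τ)
        - ∫ y in Ioi (0:ℝ), K x y * u x τ * u y τ))


section AuxLipschitz

open Topology
open scoped ENNReal NNReal

lemma aux_two_le_w {x : ℝ} (hx : 0 < x) : 2 ≤ x + x⁻¹ := by
  have h : (x + x⁻¹) - 2 = (x - 1)^2 / x := by field_simp; ring
  nlinarith [sq_nonneg (x-1), div_nonneg (sq_nonneg (x-1)) hx.le]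

lemma aux_rpow_le_w {x : ℝ} (hx : 0 < x) {a : ℝ} (h1 : -1 ≤ a) (h2 : a ≤ 1) :
    x ^ a ≤ x + x⁻¹ := by
  rcases le_or_gt 1 x with hx1 | hx1
  · have h : x ^ a ≤ x ^ (1:ℝ) := Real.rpow_le_rpow_of_exponent_le hx1 h2
    rw [Real.rpow_one] at h
    have hinv : (0:ℝ) ≤ x⁻¹ := by positivity
    linarith
  · have h : x ^ a ≤ x ^ (-1:ℝ) := Real.rpow_le_rpow_of_exponent_ge hx hx1.le h1
    rw [Real.rpow_neg_one] at h
    linarith [hx.le]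

lemma aux_pow_convex {a b p : ℝ} (ha : 0 ≤ a) (hb : 0 ≤ b) (hp : 1 ≤ p) :
    (a + b) ^ p ≤ 2 ^ (p - 1) * (a ^ p + b ^ p) := by
  have h := (convexOn_rpow hp).2 (mem_Ici.2 ha) (mem_Ici.2 hb)
    (by norm_num : (0:ℝ) ≤ 1/2) (by norm_num : (0:ℝ) ≤ 1/2) (by norm_num)
  simp only [smul_eq_mul] at h
  have key : ((a+b)/2) ^ p ≤ (a^p + b^p)/2 := by
    have e1 : (a+b)/2 = 1/2*a + 1/2*b := by ring
    have e2 : (a^p + b^p)/2 = 1/2*a^p + 1/2*b^p := by ring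
    rw [e1, e2]; exact h
  have h2 : (a + b) ^ p = 2 ^ p * ((a+b)/2) ^ p := by
    rw [← Real.mul_rpow (by norm_num) (by positivity)]
    ring_nf
  have h3 : (2:ℝ) ^ (p - 1) = 2 ^ p / 2 := by
    rw [Real.rpow_sub (by norm_num), Real.rpow_one]
  rw [h2, h3]
  have h2p : (0:ℝ) < 2 ^ p := Real.rpow_pos_of_pos (by norm_num) p
  calc 2 ^ p * ((a+b)/2) ^ p ≤ 2 ^ p * ((a^p + b^p)/2) :=
        mul_le_mul_of_nonneg_left key h2p.le
    _ = 2 ^ p / 2 * (a ^ p + b ^ p) := by ring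

lemma aux_kernel_bound {K : ℝ → ℝ → ℝ} {σ lam : ℝ} (hK : KernelHyp K 1 σ lam)
    {C : ℝ} (hC : C = if lam ≤ 1 then 1 else 2 ^ (2 * lam - 2)) :
    ∀ ⦃x y : ℝ⦄, 0 < x → 0 < y → K x y ≤ 3 * C * ((x + x⁻¹) * (y + y⁻¹)) := by
  obtain ⟨hσ0, hσh⟩ := hK.sigma_mem
  obtain ⟨hl0, hl1⟩ := hK.lam_sub
  intro x y hx hy
  have hlam0 : 0 ≤ lam := by linarith
  have hwx : 0 < x + x⁻¹ := by have := aux_two_le_w hx; linarith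
  have hwy : 0 < y + y⁻¹ := by have := aux_two_le_w hy; linarith
  have hX0 : (0:ℝ) ≤ x ^ (-σ) := Real.rpow_nonneg hx.le _
  have hY0 : (0:ℝ) ≤ y ^ (-σ) := Real.rpow_nonneg hy.le _
  have hA1x : x ^ (-σ) ≤ x + x⁻¹ := aux_rpow_le_w hx (by linarith) (by linarith)
  have hA1y : y ^ (-σ) ≤ y + y⁻¹ := aux_rpow_le_w hy (by linarith) (by linarith)
  have hA2x : x ^ (lam - σ) ≤ x + x⁻¹ := aux_rpow_le_w hx (by linarith) (by linarith)
  have hA2y : y ^ (lam - σ) ≤ y + y⁻¹ := aux_rpow_le_w hy (by linarith) (by linarith)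
  have exls : x ^ (lam - σ) = x ^ lam * x ^ (-σ) := by
    rw [show lam - σ = lam + -σ by ring, Real.rpow_add hx]
  have eyls : y ^ (lam - σ) = y ^ lam * y ^ (-σ) := by
    rw [show lam - σ = lam + -σ by ring, Real.rpow_add hy]
  have hKb : K x y ≤ (1+x+y)^lam * (x ^ (-σ) * y ^ (-σ)) := by
    have h := hK.bound hx hy
    rwa [one_mul, Real.mul_rpow hx.le hy.le] at h
  rcases le_or_gt lam 1 with hlam | hlam
  · -- C = 1
    have hCe : C = 1 := by rw [hC, if_pos hlam]
    have h1 : (1+x+y)^lam ≤ 1+x+y := by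
      calc (1+x+y)^lam ≤ (1+x+y)^(1:ℝ) :=
            Real.rpow_le_rpow_of_exponent_le (by linarith) hlam
        _ = 1+x+y := Real.rpow_one _
    have hA3x : x ^ (1 - σ) ≤ x + x⁻¹ := aux_rpow_le_w hx (by linarith) (by linarith)
    have hA3y : y ^ (1 - σ) ≤ y + y⁻¹ := aux_rpow_le_w hy (by linarith) (by linarith)
    have ex1 : x ^ (1-σ) = x * x ^ (-σ) := by
      rw [show (1:ℝ)-σ = 1 + -σ by ring, Real.rpow_add hx, Real.rpow_one]
    have ey1 : y ^ (1-σ) = y * y ^ (-σ) := by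
      rw [show (1:ℝ)-σ = 1 + -σ by ring, Real.rpow_add hy, Real.rpow_one]
    have expand : (1+x+y) * (x ^ (-σ) * y ^ (-σ))
        = x ^ (-σ) * y ^ (-σ) + x ^ (1-σ) * y ^ (-σ) + x ^ (-σ) * y ^ (1-σ) := by
      rw [ex1, ey1]; ring
    have t1 : x ^ (-σ) * y ^ (-σ) ≤ (x+x⁻¹)*(y+y⁻¹) :=
      mul_le_mul hA1x hA1y hY0 hwx.le
    have t2 : x ^ (1-σ) * y ^ (-σ) ≤ (x+x⁻¹)*(y+y⁻¹) :=
      mul_le_mul hA3x hA1y hY0 hwx.le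
    have t3 : x ^ (-σ) * y ^ (1-σ) ≤ (x+x⁻¹)*(y+y⁻¹) :=
      mul_le_mul hA1x hA3y (Real.rpow_nonneg hy.le _) hwx.le
    have hstep : K x y ≤ (1+x+y) * (x ^ (-σ) * y ^ (-σ)) := by
      refine hKb.trans ?_
      exact mul_le_mul_of_nonneg_right h1 (by positivity)
    rw [expand] at hstep
    rw [hCe]
    linarith
  · -- C = 2^(2 lam - 2)
    have hCe : C = 2 ^ (2*lam - 2) := by rw [hC, if_neg (not_le.2 hlam)]
    have hP : (0:ℝ) < 2 ^ (lam-1) := Real.rpow_pos_of_pos (by norm_num) _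
    have h1 : (1+x+y)^lam ≤ 2^(lam-1) * ((1+x)^lam + y^lam) := by
      have := aux_pow_convex (by linarith : (0:ℝ) ≤ 1+x) hy.le hlam.le
      rwa [show (1+x)+y = 1+x+y by ring] at this
    have h2 : (1+x)^lam ≤ 2^(lam-1) * (1 + x^lam) := by
      have := aux_pow_convex (by norm_num : (0:ℝ) ≤ 1) hx.le hlam.le
      rwa [Real.one_rpow] at this
    have g8 : (2:ℝ)^(lam-1) * 2^(lam-1) = C := by
      rw [hCe, ← Real.rpow_add (by norm_num : (0:ℝ) < 2)]
      congr 1; ring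
    have g9 : (2:ℝ)^(lam-1) ≤ C := by
      rw [hCe]
      exact Real.rpow_le_rpow_of_exponent_le (by norm_num) (by linarith)
    have key1 : (1+x)^lam * x ^ (-σ) ≤ 2^(lam-1) * (2 * (x+x⁻¹)) := by
      calc (1+x)^lam * x ^ (-σ) ≤ (2^(lam-1) * (1 + x^lam)) * x ^ (-σ) :=
            mul_le_mul_of_nonneg_right h2 hX0
        _ = 2^(lam-1) * (x ^ (-σ) + x^lam * x ^ (-σ)) := by ring
        _ = 2^(lam-1) * (x ^ (-σ) + x^(lam-σ)) := by rw [← exls]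
        _ ≤ 2^(lam-1) * ((x+x⁻¹) + (x+x⁻¹)) := by
            exact mul_le_mul_of_nonneg_left (add_le_add hA1x hA2x) hP.le
        _ = 2^(lam-1) * (2 * (x+x⁻¹)) := by ring
    have key2 : y^lam * y ^ (-σ) ≤ y+y⁻¹ := by rw [← eyls]; exact hA2y
    have hyl0 : (0:ℝ) ≤ y ^ lam * y ^ (-σ) :=
      mul_nonneg (Real.rpow_nonneg hy.le _) hY0
    calc K x y ≤ (1+x+y)^lam * (x ^ (-σ) * y ^ (-σ)) := hKb
      _ ≤ (2^(lam-1) * ((1+x)^lam + y^lam)) * (x ^ (-σ) * y ^ (-σ)) :=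
          mul_le_mul_of_nonneg_right h1 (by positivity)
      _ = 2^(lam-1) * (((1+x)^lam * x ^ (-σ)) * y ^ (-σ) + x ^ (-σ) * (y^lam * y ^ (-σ))) := by
          ring
      _ ≤ 2^(lam-1) * ((2^(lam-1) * (2 * (x+x⁻¹))) * (y+y⁻¹) + (x+x⁻¹) * (y+y⁻¹)) := by
          refine mul_le_mul_of_nonneg_left (add_le_add ?_ ?_) hP.le
          · exact mul_le_mul key1 hA1y hY0 (by positivity)
          · exact mul_le_mul hA1x key2 hyl0 hwx.le
      _ = (2^(lam-1) * 2^(lam-1)) * (2 * ((x+x⁻¹) * (y+y⁻¹))) + 2^(lam-1) * ((x+x⁻¹)*(y+y⁻¹)) := by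
          ring
      _ ≤ C * (2 * ((x+x⁻¹) * (y+y⁻¹))) + C * ((x+x⁻¹)*(y+y⁻¹)) := by
          rw [g8]
          have := mul_le_mul_of_nonneg_right g9 (mul_pos hwx hwy).le
          linarith
      _ = 3 * C * ((x+x⁻¹)*(y+y⁻¹)) := by ring

open scoped Classical in
lemma aux_isOpen_indicator_measurable {α : Type*} [TopologicalSpace α] [MeasurableSpace α]
    [OpensMeasurableSpace α] {f : α → ℝ} {U : Set α} (hU : IsOpen U)
    (hf : ContinuousOn f U) : Measurable (U.indicator f) := by
  apply measurable_of_isOpen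
  intro s hs
  have : (U.indicator f) ⁻¹' s
      = (U ∩ f ⁻¹' s) ∪ (if (0:ℝ) ∈ s then Uᶜ else ∅) := by
    ext z
    by_cases hz : z ∈ U
    · simp [Set.indicator_of_mem hz, hz]
    · simp only [Set.mem_preimage, Set.indicator_of_notMem hz]
      by_cases h0 : (0:ℝ) ∈ s <;> simp [h0, hz]
  rw [this]
  refine MeasurableSet.union ?_ ?_
  · exact (hf.isOpen_inter_preimage hU hs).measurableSet
  · split_ifs
    · exact hU.measurableSet.compl
    · exact MeasurableSet.empty

lemma aux_exists_meas_version (u : ℝ → ℝ → ℝ)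
    (hmeas : ∀ t : ℝ, 0 ≤ t → AEStronglyMeasurable (fun x => u x t) (volume.restrict (Ioi 0)))
    (hcont : ∀ᵐ x ∂(volume.restrict (Ioi (0:ℝ))), ContinuousOn (fun t => u x t) (Ici 0)) :
    ∃ v : ℝ → ℝ → ℝ, Measurable (Function.uncurry v) ∧
      (∀ᵐ x ∂(volume.restrict (Ioi (0:ℝ))), ∀ t, 0 ≤ t → v x t = u x t) := by
  set μ := volume.restrict (Ioi (0:ℝ)) with hμ
  have hr : ∀ n k : ℕ, (0:ℝ) ≤ (k:ℝ)/2^n := fun n k => by positivity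
  set W : ℕ → ℕ → ℝ → ℝ := fun n k => (hmeas ((k:ℝ)/2^n) (hr n k)).mk _ with hW
  have hWsm : ∀ n k, StronglyMeasurable (W n k) :=
    fun n k => (hmeas ((k:ℝ)/2^n) (hr n k)).stronglyMeasurable_mk
  have hWae : ∀ᵐ x ∂μ, ∀ n k : ℕ, u x ((k:ℝ)/2^n) = W n k x := by
    rw [ae_all_iff]
    intro n
    rw [ae_all_iff]
    intro k
    exact (hmeas ((k:ℝ)/2^n) (hr n k)).ae_eq_mk
  have hQ : ∀ᵐ x ∂μ, ContinuousOn (fun t => u x t) (Ici 0) ∧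
      ∀ n k : ℕ, u x ((k:ℝ)/2^n) = W n k x := hcont.and hWae
  set bad := toMeasurable μ {x | ¬ (ContinuousOn (fun t => u x t) (Ici 0) ∧
      ∀ n k : ℕ, u x ((k:ℝ)/2^n) = W n k x)} with hbad
  have hbadm : MeasurableSet bad := measurableSet_toMeasurable _ _
  have hbadμ : μ bad = 0 := by
    rw [hbad, measure_toMeasurable]
    exact hQ
  set G : Set ℝ := Ioi 0 ∩ badᶜ with hG
  have hGm : MeasurableSet G := measurableSet_Ioi.inter hbadm.compl
  have hGae : ∀ᵐ x ∂μ, x ∈ G := by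
    have h1 : ∀ᵐ x ∂μ, x ∈ Ioi (0:ℝ) := ae_restrict_mem measurableSet_Ioi
    have h2 : ∀ᵐ x ∂μ, x ∉ bad := measure_eq_zero_iff_ae_notMem.1 hbadμ
    filter_upwards [h1, h2] with x hx1 hx2
    exact ⟨hx1, hx2⟩
  have hGQ : ∀ x ∈ G, ContinuousOn (fun t => u x t) (Ici 0) ∧
      ∀ n k : ℕ, u x ((k:ℝ)/2^n) = W n k x := by
    intro x hx
    by_contra hcon
    exact hx.2 (subset_toMeasurable _ _ hcon)
  -- dyadic approximations
  set s : ℕ → ℝ → ℕ := fun n t => ⌈(max t 0) * 2^n⌉₊ with hs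
  have hs_meas : ∀ n, Measurable (s n) := by
    intro n
    apply Monotone.measurable
    intro a b hab
    exact Nat.ceil_le_ceil (mul_le_mul_of_nonneg_right (max_le_max hab le_rfl) (by positivity))
  set g : ℕ → ℝ × ℝ → ℝ := fun n p => G.indicator (fun x => W n (s n p.2) x) p.1 with hg
  have hgmeas : ∀ n, Measurable (g n) := by
    intro n
    have hF : Measurable (fun q : ℝ × ℕ => G.indicator (W n q.2) q.1) := by
      apply measurable_from_prod_countable_left
      intro k
      exact ((hWsm n k).measurable).indicator hGm
    exact hF.comp (measurable_fst.prodMk ((hs_meas n).comp measurable_snd))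
  set v : ℝ → ℝ → ℝ := fun x t => G.indicator (fun x' => u x' (max t 0)) x with hv
  have htend : ∀ p : ℝ × ℝ, Tendsto (fun n => g n p) atTop (𝓝 (Function.uncurry v p)) := by
    intro p
    by_cases hxG : p.1 ∈ G
    · have hQ1 := hGQ p.1 hxG
      set st := max p.2 0 with hst
      have hst0 : 0 ≤ st := le_max_right _ _
      set c : ℕ → ℝ := fun n => ((⌈st * 2^n⌉₊ : ℝ))/2^n with hc
      have hgeq : (fun n => g n p) = fun n => u p.1 (c n) := by
        funext n
        rw [hg]
        simp only [Set.indicator_of_mem hxG]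
        exact (hQ1.2 n (s n p.2)).symm
      have hveq : Function.uncurry v p = u p.1 st := by
        simp only [hv, Function.uncurry]
        rw [Set.indicator_of_mem hxG]
      rw [hgeq, hveq]
      have hc1 : ∀ n, st ≤ c n := by
        intro n
        rw [hc, le_div_iff₀ (by positivity : (0:ℝ) < 2^n)]
        exact Nat.le_ceil _
      have hc2 : ∀ n, c n ≤ st + ((2:ℝ)^n)⁻¹ := by
        intro n
        rw [hc, div_le_iff₀ (by positivity : (0:ℝ) < 2^n)]
        have := (Nat.ceil_lt_add_one (by positivity : (0:ℝ) ≤ st * 2^n)).le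
        calc (⌈st * 2^n⌉₊:ℝ) ≤ st * 2^n + 1 := this
          _ = (st + ((2:ℝ)^n)⁻¹) * 2^n := by field_simp
      have hlim : Tendsto (fun n : ℕ => st + ((2:ℝ)^n)⁻¹) atTop (𝓝 st) := by
        have : Tendsto (fun n : ℕ => ((2:ℝ)^n)⁻¹) atTop (𝓝 0) := by
          apply tendsto_inv_atTop_zero.comp
          exact tendsto_pow_atTop_atTop_of_one_lt one_lt_two
        simpa using tendsto_const_nhds.add this
      have hcc : Tendsto c atTop (𝓝 st) :=
        tendsto_of_tendsto_of_tendsto_of_le_of_le tendsto_const_nhds hlim hc1 hc2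
      have hcw : Tendsto c atTop (𝓝[Ici 0] st) := by
        rw [tendsto_nhdsWithin_iff]
        exact ⟨hcc, Eventually.of_forall fun n => mem_Ici.2 (by positivity)⟩
      exact ((hQ1.1 st hst0).tendsto).comp hcw
    · have : (fun n => g n p) = fun _ => 0 := by
        funext n
        rw [hg]
        simp only [Set.indicator_of_notMem hxG]
      rw [this]
      have : Function.uncurry v p = 0 := by
        simp only [hv, Function.uncurry]
        rw [Set.indicator_of_notMem hxG]
      rw [this]
      exact tendsto_const_nhds
  have hvmeas : Measurable (Function.uncurry v) :=
    measurable_of_tendsto_metrizable hgmeas (tendsto_pi_nhds.2 htend)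
  refine ⟨v, hvmeas, ?_⟩
  filter_upwards [hGae] with x hx t ht
  simp only [hv]
  rw [Set.indicator_of_mem hx, max_eq_left ht]

lemma aux_conv {f g : ℝ → ℝ≥0∞} (hf : Measurable f) (hg : Measurable g) :
    (∫⁻ x in Ioi (0:ℝ), ∫⁻ y in Ioo 0 x, f (x - y) * g y)
      ≤ (∫⁻ z in Ioi (0:ℝ), f z) * (∫⁻ z in Ioi (0:ℝ), g z) := by
  set F := (Ioi (0:ℝ)).indicator f with hF
  set G := (Ioi (0:ℝ)).indicator g with hG
  have hFm : Measurable F := hf.indicator measurableSet_Ioi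
  have hGm : Measurable G := hg.indicator measurableSet_Ioi
  have h1 : (∫⁻ x in Ioi (0:ℝ), ∫⁻ y in Ioo 0 x, f (x - y) * g y)
      ≤ ∫⁻ x, ∫⁻ y, F (x - y) * G y := by
    refine le_trans (le_trans ?_ (setLIntegral_le_lintegral (Ioi (0:ℝ))
      (fun x => ∫⁻ y, F (x - y) * G y))) le_rfl
    apply lintegral_mono
    intro x
    show (∫⁻ y in Ioo 0 x, f (x - y) * g y) ≤ ∫⁻ y, F (x - y) * G y
    rw [← lintegral_indicator measurableSet_Ioo]
    refine lintegral_mono fun y => ?_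
    show (Ioo 0 x).indicator (fun y => f (x - y) * g y) y ≤ F (x - y) * G y
    by_cases hy : y ∈ Ioo 0 x
    · rw [Set.indicator_of_mem hy, hF, hG,
        Set.indicator_of_mem (show x - y ∈ Ioi (0:ℝ) by simp [hy.2]),
        Set.indicator_of_mem (show y ∈ Ioi (0:ℝ) from hy.1)]
    · rw [Set.indicator_of_notMem hy]
      exact zero_le
  have hswap : (∫⁻ x, ∫⁻ y, F (x - y) * G y) = ∫⁻ y, ∫⁻ x, F (x - y) * G y := by
    apply lintegral_lintegral_swap
    exact (((hFm.comp (measurable_fst.sub measurable_snd))).mul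
      (hGm.comp measurable_snd)).aemeasurable
  have h2 : (∫⁻ y, ∫⁻ x, F (x - y) * G y)
      = (∫⁻ z in Ioi (0:ℝ), f z) * (∫⁻ z in Ioi (0:ℝ), g z) := by
    have hinner : ∀ y : ℝ, (∫⁻ x, F (x - y) * G y) = G y * ∫⁻ z in Ioi (0:ℝ), f z := by
      intro y
      have e1 : (∫⁻ x, F (x - y) * G y) = ∫⁻ x, G y * F (x - y) := by
        simp_rw [mul_comm]
      rw [e1, lintegral_const_mul (G y)
        (show Measurable (fun x => F (x - y)) from hFm.comp (measurable_sub_const y))]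
      congr 1
      rw [lintegral_sub_right_eq_self F y, hF, lintegral_indicator measurableSet_Ioi]
    simp_rw [hinner]
    rw [lintegral_mul_const _ hGm, hG, lintegral_indicator measurableSet_Ioi]
    ring
  calc (∫⁻ x in Ioi (0:ℝ), ∫⁻ y in Ioo 0 x, f (x - y) * g y)
      ≤ ∫⁻ x, ∫⁻ y, F (x - y) * G y := h1
    _ = ∫⁻ y, ∫⁻ x, F (x - y) * G y := hswap
    _ = (∫⁻ z in Ioi (0:ℝ), f z) * (∫⁻ z in Ioi (0:ℝ), g z) := h2

theorem aux_key
    (K : ℝ → ℝ → ℝ) (σ lam : ℝ) (hK : KernelHyp K 1 σ lam)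
    (u0 : ℝ → ℝ)
    (L : ℝ) (hLpos : 0 < L)
    (u : ℝ → ℝ → ℝ) (hsol : IsSol K u0 u)
    (hbound : ∀ t : ℝ, 0 ≤ t → Ynorm (fun x => u x t) ≤ 2 * L)
    (C : ℝ) (hC : C = if lam ≤ 1 then 1 else 2 ^ (2 * lam - 2))
    (t t' : ℝ) (ht : 0 ≤ t) (htt' : t ≤ t') :
    (∫ x in Ioi (0:ℝ), |u x t' - u x t|) ≤ 18 * C * L ^ 2 * (t' - t) := by
  have ht0' : (0:ℝ) ≤ t' := ht.trans htt'
  have hC0 : 0 < C := by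
    rw [hC]; split_ifs
    · norm_num
    · exact Real.rpow_pos_of_pos (by norm_num) _
  -- measurable version of u
  obtain ⟨v, hvm, hvu⟩ := aux_exists_meas_version u
    (fun s hs => ((hsol.1 s hs).1).aestronglyMeasurable)
    (hsol.2.mono fun x hx => hx.2.1)
  -- measurable kernel extension
  set Km : ℝ × ℝ → ℝ := (Ioi (0:ℝ) ×ˢ Ioi (0:ℝ)).indicator (Function.uncurry K) with hKmdef
  have hKmm : Measurable Km :=
    aux_isOpen_indicator_measurable (isOpen_Ioi.prod isOpen_Ioi) hK.cont
  have hKmeq : ∀ {a b : ℝ}, 0 < a → 0 < b → Km (a, b) = K a b := by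
    intro a b ha hb
    rw [hKmdef, Set.indicator_of_mem (show (a,b) ∈ Ioi (0:ℝ) ×ˢ Ioi (0:ℝ) from ⟨ha, hb⟩)]
    rfl
  have hKm0 : ∀ p : ℝ × ℝ, 0 ≤ Km p := by
    intro p
    rw [hKmdef]
    by_cases hp : p ∈ Ioi (0:ℝ) ×ˢ Ioi (0:ℝ)
    · rw [Set.indicator_of_mem hp]
      exact hK.nonneg hp.1 hp.2
    · rw [Set.indicator_of_notMem hp]
  -- core integrands
  set gcore : (ℝ × ℝ) × ℝ → ℝ := fun q =>
    {q : (ℝ × ℝ) × ℝ | 0 < q.2 ∧ q.2 < q.1.1}.indicator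
      (fun q => Km (q.1.1 - q.2, q.2) * v (q.1.1 - q.2) q.1.2 * v q.2 q.1.2) q with hgcdef
  set lcore : (ℝ × ℝ) × ℝ → ℝ := fun q =>
    {q : (ℝ × ℝ) × ℝ | 0 < q.2}.indicator
      (fun q => Km (q.1.1, q.2) * v q.1.1 q.1.2 * v q.2 q.1.2) q with hlcdef
  have hgS : MeasurableSet {q : (ℝ × ℝ) × ℝ | 0 < q.2 ∧ q.2 < q.1.1} :=
    (measurableSet_lt measurable_const measurable_snd).inter
      (measurableSet_lt measurable_snd (measurable_fst.comp measurable_fst))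
  have hlS : MeasurableSet {q : (ℝ × ℝ) × ℝ | 0 < q.2} :=
    measurableSet_lt measurable_const measurable_snd
  have hvq1 : Measurable fun q : (ℝ × ℝ) × ℝ => v (q.1.1 - q.2) q.1.2 :=
    hvm.comp (((measurable_fst.comp measurable_fst).sub measurable_snd).prodMk
      (measurable_snd.comp measurable_fst))
  have hvq2 : Measurable fun q : (ℝ × ℝ) × ℝ => v q.2 q.1.2 :=
    hvm.comp (measurable_snd.prodMk (measurable_snd.comp measurable_fst))
  have hvq3 : Measurable fun q : (ℝ × ℝ) × ℝ => v q.1.1 q.1.2 :=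
    hvm.comp ((measurable_fst.comp measurable_fst).prodMk
      (measurable_snd.comp measurable_fst))
  have hgcm : Measurable gcore := by
    rw [hgcdef]
    exact (((hKmm.comp (((measurable_fst.comp measurable_fst).sub measurable_snd).prodMk
      measurable_snd)).mul hvq1).mul hvq2).indicator hgS
  have hlcm : Measurable lcore := by
    rw [hlcdef]
    exact (((hKmm.comp ((measurable_fst.comp measurable_fst).prodMk
      measurable_snd)).mul hvq3).mul hvq2).indicator hlS
  -- the integrated function
  set Fv : ℝ → ℝ → ℝ := fun x τ =>
    (1/2) * (∫ y, gcore ((x, τ), y)) - ∫ y, lcore ((x, τ), y) with hFvdef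
  have hGsm : StronglyMeasurable fun p : ℝ × ℝ => ∫ y, gcore (p, y) :=
    hgcm.stronglyMeasurable.integral_prod_right'
  have hLsm : StronglyMeasurable fun p : ℝ × ℝ => ∫ y, lcore (p, y) :=
    hlcm.stronglyMeasurable.integral_prod_right'
  have hFvm : Measurable fun p : ℝ × ℝ => Fv p.1 p.2 := by
    rw [hFvdef]
    exact ((hGsm.measurable.const_mul _).sub hLsm.measurable)
  have hPhiGm : Measurable fun p : ℝ × ℝ => ∫⁻ y, ↑‖gcore (p, y)‖₊ :=
    hgcm.enorm.lintegral_prod_right'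
  have hPhiLm : Measurable fun p : ℝ × ℝ => ∫⁻ y, ↑‖lcore (p, y)‖₊ :=
    hlcm.enorm.lintegral_prod_right'
  -- weighted quantities
  set Vt : ℝ → ℝ → ℝ≥0∞ := fun τ z => ENNReal.ofReal (z + z⁻¹) * ↑‖v z τ‖₊ with hVtdef
  have hVtm : ∀ τ, Measurable (Vt τ) := by
    intro τ
    rw [hVtdef]
    exact (ENNReal.measurable_ofReal.comp (measurable_id.add measurable_inv)).mul
      ((hvm.comp (measurable_id.prodMk measurable_const)).enorm)
  have hVtfin : ∀ τ z, Vt τ z ≠ ∞ := fun τ z =>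
    ENNReal.mul_ne_top ENNReal.ofReal_ne_top ENNReal.coe_ne_top
  have hIle : ∀ τ, 0 ≤ τ → (∫⁻ z in Ioi (0:ℝ), Vt τ z) ≤ ENNReal.ofReal (2*L) := by
    intro τ hτ
    have hcg : ∀ᵐ z ∂(volume.restrict (Ioi (0:ℝ))), Vt τ z
        = ENNReal.ofReal ((z + z⁻¹) * |u z τ|) := by
      filter_upwards [hvu, ae_restrict_mem measurableSet_Ioi] with z hz hz0
      simp only [hVtdef]
      have h2 := aux_two_le_w hz0
      rw [← enorm_eq_nnnorm, Real.enorm_eq_ofReal_abs, ← ENNReal.ofReal_mul (by linarith), hz τ hτ]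
    rw [lintegral_congr_ae hcg,
      ← ofReal_integral_eq_lintegral_ofReal (hsol.1 τ hτ).2.1 ?hnn]
    · have hb := hbound τ hτ
      simp only [Ynorm] at hb
      exact ENNReal.ofReal_le_ofReal hb
    case hnn =>
      filter_upwards [ae_restrict_mem measurableSet_Ioi] with z hz0
      have h2 := aux_two_le_w hz0
      exact mul_nonneg (by linarith) (abs_nonneg _)
  have hKE : ∀ {a b : ℝ}, 0 < a → 0 < b →
      (‖Km (a, b)‖₊ : ℝ≥0∞)
        ≤ ENNReal.ofReal (3*C) * (ENNReal.ofReal (a + a⁻¹) * ENNReal.ofReal (b + b⁻¹)) := by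
    intro a b ha hb
    rw [← enorm_eq_nnnorm, Real.enorm_eq_ofReal (hKm0 (a,b)), hKmeq ha hb]
    calc ENNReal.ofReal (K a b) ≤ ENNReal.ofReal (3*C*((a+a⁻¹)*(b+b⁻¹))) :=
          ENNReal.ofReal_le_ofReal (aux_kernel_bound hK hC ha hb)
      _ = _ := by
          have hwa : (0:ℝ) ≤ a + a⁻¹ := by linarith [aux_two_le_w ha]
          rw [ENNReal.ofReal_mul (by positivity : (0:ℝ) ≤ 3*C), ENNReal.ofReal_mul hwa]
  have hprod : ∀ (τ : ℝ) {a b : ℝ}, 0 < a → 0 < b →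
      (‖Km (a,b) * v a τ * v b τ‖₊ : ℝ≥0∞) ≤ ENNReal.ofReal (3*C) * (Vt τ a * Vt τ b) := by
    intro τ a b ha hb
    have he : (‖Km (a,b) * v a τ * v b τ‖₊ : ℝ≥0∞) = ↑‖Km (a,b)‖₊ * ↑‖v a τ‖₊ * ↑‖v b τ‖₊ := by
      rw [nnnorm_mul, nnnorm_mul]
      push_cast
      ring
    rw [he, hVtdef]
    calc (‖Km (a,b)‖₊ : ℝ≥0∞) * ↑‖v a τ‖₊ * ↑‖v b τ‖₊
        ≤ (ENNReal.ofReal (3*C) * (ENNReal.ofReal (a+a⁻¹) * ENNReal.ofReal (b+b⁻¹)))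
            * ↑‖v a τ‖₊ * ↑‖v b τ‖₊ := by
          gcongr
          exact hKE ha hb
      _ = ENNReal.ofReal (3*C) * ((ENNReal.ofReal (a+a⁻¹) * ↑‖v a τ‖₊)
            * (ENNReal.ofReal (b+b⁻¹) * ↑‖v b τ‖₊)) := by ring
  have hGainB : ∀ τ : ℝ, 0 ≤ τ →
      (∫⁻ x in Ioi (0:ℝ), ∫⁻ y, ↑‖gcore ((x, τ), y)‖₊)
        ≤ ENNReal.ofReal (3*C) * (ENNReal.ofReal (2*L) * ENNReal.ofReal (2*L)) := by
    intro τ hτ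
    have hsec : ∀ x y : ℝ, (‖gcore ((x,τ),y)‖₊ : ℝ≥0∞)
        = (Ioo 0 x).indicator (fun y => (‖Km (x-y,y) * v (x-y) τ * v y τ‖₊ : ℝ≥0∞)) y := by
      intro x y
      simp only [hgcdef]
      by_cases hy : y ∈ Ioo 0 x
      · rw [Set.indicator_of_mem hy,
          Set.indicator_of_mem (show ((x,τ),y) ∈ {q : (ℝ×ℝ)×ℝ | 0 < q.2 ∧ q.2 < q.1.1} from ⟨hy.1, hy.2⟩)]
      · rw [Set.indicator_of_notMem hy,
          Set.indicator_of_notMem (show ((x,τ),y) ∉ {q : (ℝ×ℝ)×ℝ | 0 < q.2 ∧ q.2 < q.1.1} from hy)]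
        simp
    calc (∫⁻ x in Ioi (0:ℝ), ∫⁻ y, ↑‖gcore ((x, τ), y)‖₊)
        = ∫⁻ x in Ioi (0:ℝ), ∫⁻ y in Ioo 0 x, ↑‖Km (x-y,y) * v (x-y) τ * v y τ‖₊ := by
          refine lintegral_congr fun x => ?_
          simp_rw [hsec x]
          rw [lintegral_indicator measurableSet_Ioo]
      _ ≤ ∫⁻ x in Ioi (0:ℝ), ∫⁻ y in Ioo 0 x, ENNReal.ofReal (3*C) * (Vt τ (x-y) * Vt τ y) := by
          refine lintegral_mono fun x => lintegral_mono_ae ?_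
          filter_upwards [ae_restrict_mem measurableSet_Ioo] with y hy
          exact hprod τ (sub_pos.2 hy.2) hy.1
      _ = ENNReal.ofReal (3*C) * ∫⁻ x in Ioi (0:ℝ), ∫⁻ y in Ioo 0 x, Vt τ (x-y) * Vt τ y := by
          simp_rw [lintegral_const_mul' (ENNReal.ofReal (3*C)) _ ENNReal.ofReal_ne_top]
      _ ≤ ENNReal.ofReal (3*C) * ((∫⁻ z in Ioi (0:ℝ), Vt τ z) * (∫⁻ z in Ioi (0:ℝ), Vt τ z)) := by
          gcongr
          exact aux_conv (hVtm τ) (hVtm τ)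
      _ ≤ _ := by
          gcongr <;> exact hIle τ hτ
  have hLossB : ∀ τ : ℝ, 0 ≤ τ →
      (∫⁻ x in Ioi (0:ℝ), ∫⁻ y, ↑‖lcore ((x, τ), y)‖₊)
        ≤ ENNReal.ofReal (3*C) * (ENNReal.ofReal (2*L) * ENNReal.ofReal (2*L)) := by
    intro τ hτ
    have hIfin : (∫⁻ z in Ioi (0:ℝ), Vt τ z) ≠ ∞ :=
      (lt_of_le_of_lt (hIle τ hτ) ENNReal.ofReal_lt_top).ne
    have hsec : ∀ x y : ℝ, (‖lcore ((x,τ),y)‖₊ : ℝ≥0∞)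
        = (Ioi 0).indicator (fun y => (‖Km (x,y) * v x τ * v y τ‖₊ : ℝ≥0∞)) y := by
      intro x y
      simp only [hlcdef]
      by_cases hy : y ∈ Ioi (0:ℝ)
      · rw [Set.indicator_of_mem hy,
          Set.indicator_of_mem (show ((x,τ),y) ∈ {q : (ℝ×ℝ)×ℝ | 0 < q.2} from hy)]
      · rw [Set.indicator_of_notMem hy,
          Set.indicator_of_notMem (show ((x,τ),y) ∉ {q : (ℝ×ℝ)×ℝ | 0 < q.2} from hy)]
        simp
    calc (∫⁻ x in Ioi (0:ℝ), ∫⁻ y, ↑‖lcore ((x, τ), y)‖₊)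
        = ∫⁻ x in Ioi (0:ℝ), ∫⁻ y in Ioi 0, ↑‖Km (x,y) * v x τ * v y τ‖₊ := by
          refine lintegral_congr fun x => ?_
          simp_rw [hsec x]
          rw [lintegral_indicator measurableSet_Ioi]
      _ ≤ ∫⁻ x in Ioi (0:ℝ), ∫⁻ y in Ioi 0, ENNReal.ofReal (3*C) * (Vt τ x * Vt τ y) := by
          refine lintegral_mono_ae ?_
          filter_upwards [ae_restrict_mem measurableSet_Ioi] with x hx
          refine lintegral_mono_ae ?_
          filter_upwards [ae_restrict_mem measurableSet_Ioi] with y hy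
          exact hprod τ hx hy
      _ = ∫⁻ x in Ioi (0:ℝ), (ENNReal.ofReal (3*C) * Vt τ x) * ∫⁻ y in Ioi 0, Vt τ y := by
          refine lintegral_congr fun x => ?_
          rw [← lintegral_const_mul' (ENNReal.ofReal (3*C) * Vt τ x) _
            (ENNReal.mul_ne_top ENNReal.ofReal_ne_top (hVtfin τ x))]
          refine lintegral_congr fun y => ?_
          ring
      _ = (ENNReal.ofReal (3*C) * ∫⁻ x in Ioi (0:ℝ), Vt τ x) * ∫⁻ y in Ioi 0, Vt τ y := by
          rw [lintegral_mul_const' _ _ hIfin,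
            lintegral_const_mul' _ _ ENNReal.ofReal_ne_top]
      _ ≤ (ENNReal.ofReal (3*C) * ENNReal.ofReal (2*L)) * ENNReal.ofReal (2*L) := by
          gcongr <;> exact hIle τ hτ
      _ = _ := by ring
  have hofR : ENNReal.ofReal (3*C) * (ENNReal.ofReal (2*L) * ENNReal.ofReal (2*L))
      = ENNReal.ofReal (12*C*L^2) := by
    rw [← ENNReal.ofReal_mul (by positivity : (0:ℝ) ≤ 2*L),
      ← ENNReal.ofReal_mul (by positivity : (0:ℝ) ≤ 3*C)]
    congr 1
    ring
  have hPerTau : ∀ τ : ℝ, 0 ≤ τ →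
      (∫⁻ x in Ioi (0:ℝ), ↑‖Fv x τ‖₊) ≤ ENNReal.ofReal (18*C*L^2) := by
    intro τ hτ
    have hptw : ∀ x : ℝ, (‖Fv x τ‖₊ : ℝ≥0∞)
        ≤ ENNReal.ofReal (1/2) * (∫⁻ y, ↑‖gcore ((x,τ),y)‖₊) + ∫⁻ y, ↑‖lcore ((x,τ),y)‖₊ := by
      intro x
      simp only [hFvdef]
      calc (‖(1/2) * (∫ y, gcore ((x,τ),y)) - ∫ y, lcore ((x,τ),y)‖₊ : ℝ≥0∞)
          ≤ ↑‖(1/2) * (∫ y, gcore ((x,τ),y))‖₊ + ↑‖∫ y, lcore ((x,τ),y)‖₊ := by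
            exact_mod_cast nnnorm_sub_le _ _
        _ ≤ ENNReal.ofReal (1/2) * (∫⁻ y, ↑‖gcore ((x,τ),y)‖₊) + ∫⁻ y, ↑‖lcore ((x,τ),y)‖₊ := by
            refine add_le_add ?_ (enorm_integral_le_lintegral_enorm _)
            rw [nnnorm_mul, ENNReal.coe_mul,
              show ((‖(1/2 : ℝ)‖₊ : ℝ≥0∞)) = ENNReal.ofReal (1/2) from
                Real.enorm_eq_ofReal (by norm_num)]
            exact mul_le_mul' le_rfl (enorm_integral_le_lintegral_enorm _)
    calc (∫⁻ x in Ioi (0:ℝ), ↑‖Fv x τ‖₊)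
        ≤ ∫⁻ x in Ioi (0:ℝ), (ENNReal.ofReal (1/2) * (∫⁻ y, ↑‖gcore ((x,τ),y)‖₊)
            + ∫⁻ y, ↑‖lcore ((x,τ),y)‖₊) := lintegral_mono hptw
      _ = ENNReal.ofReal (1/2) * (∫⁻ x in Ioi (0:ℝ), ∫⁻ y, ↑‖gcore ((x,τ),y)‖₊)
            + ∫⁻ x in Ioi (0:ℝ), ∫⁻ y, ↑‖lcore ((x,τ),y)‖₊ := by
          have hm : Measurable fun x : ℝ =>
              ENNReal.ofReal (1/2) * ∫⁻ y, ↑‖gcore ((x,τ),y)‖₊ := by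
            exact (hPhiGm.comp measurable_prodMk_right).const_mul _
          rw [lintegral_add_left hm,
            lintegral_const_mul' _ _ ENNReal.ofReal_ne_top]
      _ ≤ ENNReal.ofReal (1/2) * ENNReal.ofReal (12*C*L^2) + ENNReal.ofReal (12*C*L^2) := by
          gcongr
          · rw [← hofR]
            exact hGainB τ hτ
          · rw [← hofR]
            exact hLossB τ hτ
      _ = ENNReal.ofReal (18*C*L^2) := by
          rw [← ENNReal.ofReal_mul (by norm_num : (0:ℝ) ≤ 1/2),
            ← ENNReal.ofReal_add (by positivity) (by positivity)]
          congr 1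
          ring
  -- finiteness of the gain double integral, a.e. in x
  have hGfin : ∀ᵐ x ∂(volume.restrict (Ioi (0:ℝ))),
      (∫⁻ τ in Ioc (0:ℝ) t', ∫⁻ y, ↑‖gcore ((x,τ),y)‖₊) ≠ ∞ := by
    have hmeas : Measurable fun x : ℝ => ∫⁻ τ in Ioc (0:ℝ) t', ∫⁻ y, ↑‖gcore ((x,τ),y)‖₊ :=
      Measurable.lintegral_prod_right' (ν := volume.restrict (Ioc (0:ℝ) t')) hPhiGm
    have hswap := lintegral_lintegral_swap (μ := volume.restrict (Ioi (0:ℝ)))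
      (ν := volume.restrict (Ioc (0:ℝ) t'))
      (f := fun x τ => ∫⁻ y, ↑‖gcore ((x,τ),y)‖₊) (by exact hPhiGm.aemeasurable)
    have hfin : (∫⁻ x in Ioi (0:ℝ), ∫⁻ τ in Ioc (0:ℝ) t', ∫⁻ y, ↑‖gcore ((x,τ),y)‖₊) ≠ ∞ := by
      rw [hswap]
      have hb : (∫⁻ τ in Ioc (0:ℝ) t', ∫⁻ x in Ioi (0:ℝ), ∫⁻ y, ↑‖gcore ((x,τ),y)‖₊)
          ≤ ∫⁻ τ in Ioc (0:ℝ) t', ENNReal.ofReal (12*C*L^2) := by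
        refine lintegral_mono_ae ?_
        filter_upwards [ae_restrict_mem measurableSet_Ioc] with τ hτ
        rw [← hofR]
        exact hGainB τ hτ.1.le
      refine ne_top_of_le_ne_top ?_ hb
      rw [setLIntegral_const]
      exact ENNReal.mul_ne_top ENNReal.ofReal_ne_top
        (by rw [Real.volume_Ioc]; exact ENNReal.ofReal_ne_top)
    exact (ae_lt_top hmeas hfin).mono fun x h => h.ne
  have hvu' : ∀ᵐ y ∂(volume : Measure ℝ), y ∈ Ioi (0:ℝ) → ∀ s, 0 ≤ s → v y s = u y s :=
    ae_imp_of_ae_restrict hvu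
  have hEnull : volume {y : ℝ | ¬ (y ∈ Ioi (0:ℝ) → ∀ s, 0 ≤ s → v y s = u y s)} = 0 :=
    ae_iff.1 hvu'
  -- Step 1 : a.e. pointwise bound
  have hstep1 : ∀ᵐ x ∂(volume.restrict (Ioi (0:ℝ))),
      (‖v x t' - v x t‖₊ : ℝ≥0∞) ≤ ∫⁻ τ in Ioc t t', ↑‖Fv x τ‖₊ := by
    filter_upwards [hsol.2, hvu, hGfin, ae_restrict_mem measurableSet_Ioi]
      with x hP hvx hfin hx0
    have hreflnull : volume {y : ℝ |
        ¬ ((x - y) ∈ Ioi (0:ℝ) → ∀ s, 0 ≤ s → v (x-y) s = u (x-y) s)} = 0 := by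
      have hmp := Measure.measurePreserving_sub_left (volume : Measure ℝ) x
      have hset : {y : ℝ | ¬ ((x - y) ∈ Ioi (0:ℝ) → ∀ s, 0 ≤ s → v (x-y) s = u (x-y) s)}
          = (fun y => x - y) ⁻¹' {z : ℝ | ¬ (z ∈ Ioi (0:ℝ) → ∀ s, 0 ≤ s → v z s = u z s)} :=
        rfl
      rw [hset, hmp.measure_preimage (NullMeasurableSet.of_null hEnull)]
      exact hEnull
    have hvuR : ∀ᵐ y ∂(volume : Measure ℝ),
        (x - y) ∈ Ioi (0:ℝ) → ∀ s, 0 ≤ s → v (x-y) s = u (x-y) s := by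
      rw [ae_iff]; exact hreflnull
    obtain ⟨hnn, hcont, hint, heq⟩ := hP
    -- section identities
    have hgsec : ∀ τ : ℝ, (∫ y, gcore ((x,τ),y))
        = ∫ y in Ioo 0 x, Km (x - y, y) * v (x-y) τ * v y τ := by
      intro τ
      have hsec : ∀ y : ℝ, gcore ((x,τ),y)
          = (Ioo 0 x).indicator (fun y => Km (x - y, y) * v (x-y) τ * v y τ) y := by
        intro y
        simp only [hgcdef]
        by_cases hy : y ∈ Ioo 0 x
        · rw [Set.indicator_of_mem hy, Set.indicator_of_mem
            (show ((x,τ),y) ∈ {q : (ℝ×ℝ)×ℝ | 0 < q.2 ∧ q.2 < q.1.1} from ⟨hy.1, hy.2⟩)]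
        · rw [Set.indicator_of_notMem hy, Set.indicator_of_notMem
            (show ((x,τ),y) ∉ {q : (ℝ×ℝ)×ℝ | 0 < q.2 ∧ q.2 < q.1.1} from hy)]
      simp_rw [hsec]
      rw [integral_indicator measurableSet_Ioo]
    have hlsec : ∀ τ : ℝ, (∫ y, lcore ((x,τ),y))
        = ∫ y in Ioi 0, Km (x, y) * v x τ * v y τ := by
      intro τ
      have hsec : ∀ y : ℝ, lcore ((x,τ),y)
          = (Ioi 0).indicator (fun y => Km (x, y) * v x τ * v y τ) y := by
        intro y
        simp only [hlcdef]
        by_cases hy : y ∈ Ioi (0:ℝ)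
        · rw [Set.indicator_of_mem hy, Set.indicator_of_mem
            (show ((x,τ),y) ∈ {q : (ℝ×ℝ)×ℝ | 0 < q.2} from hy)]
        · rw [Set.indicator_of_notMem hy, Set.indicator_of_notMem
            (show ((x,τ),y) ∉ {q : (ℝ×ℝ)×ℝ | 0 < q.2} from hy)]
      simp_rw [hsec]
      rw [integral_indicator measurableSet_Ioi]
    -- the equation holds with Fv
    have hFeq : ∀ τ : ℝ, 0 ≤ τ →
        ((1/2) * ∫ y in (0:ℝ)..x, K (x - y) y * u (x - y) τ * u y τ)
          - (∫ y in Ioi (0:ℝ), K x y * u x τ * u y τ) = Fv x τ := by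
      intro τ hτ
      have hgain : (∫ y in (0:ℝ)..x, K (x - y) y * u (x - y) τ * u y τ)
          = ∫ y, gcore ((x,τ),y) := by
        rw [hgsec τ, intervalIntegral.integral_of_le hx0.le, integral_Ioc_eq_integral_Ioo]
        refine setIntegral_congr_ae measurableSet_Ioo ?_
        filter_upwards [hvu', hvuR] with y h1y h2y hy
        have hy1 : (0:ℝ) < y := hy.1
        have hxy : (0:ℝ) < x - y := sub_pos.2 hy.2
        rw [hKmeq hxy hy1, h1y hy1 τ hτ, h2y hxy τ hτ]
      have hloss : (∫ y in Ioi (0:ℝ), K x y * u x τ * u y τ) = ∫ y, lcore ((x,τ),y) := by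
        rw [hlsec τ]
        refine setIntegral_congr_ae measurableSet_Ioi ?_
        filter_upwards [hvu'] with y h1y hy
        rw [hKmeq hx0 hy, h1y hy τ hτ, hvx τ hτ]
      simp only [hFvdef]
      rw [hgain, hloss]
    have hequ : ∀ s, 0 ≤ s → u x s = u0 x + ∫ τ in (0:ℝ)..s, Fv x τ := by
      intro s hs
      rw [heq s hs]
      congr 1
      refine intervalIntegral.integral_congr ?_
      intro τ hτmem
      rw [Set.uIcc_of_le hs] at hτmem
      exact hFeq τ hτmem.1
    -- integrability of Fv x on [0, t']
    have hGx_int : IntegrableOn (fun τ => ∫ y, gcore ((x,τ),y)) (Ioc (0:ℝ) t') volume := by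
      constructor
      · exact (hGsm.comp_measurable measurable_prodMk_left).aestronglyMeasurable
      · exact lt_of_le_of_lt
          (lintegral_mono fun τ => enorm_integral_le_lintegral_enorm _)
          (lt_top_iff_ne_top.2 hfin)
    have hLo_int : IntegrableOn (fun τ => ∫ y, lcore ((x,τ),y)) (Ioc (0:ℝ) t') volume := by
      have hprodint : Integrable (fun p : ℝ × ℝ => K x p.2 * u p.2 p.1)
          ((volume.restrict (Ioc (0:ℝ) t')).prod (volume.restrict (Ioi (0:ℝ)))) := by
        rw [Measure.prod_restrict, ← Measure.volume_eq_prod]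
        exact hint t' ht0'
      have hae1 : ∀ᵐ p : ℝ × ℝ
          ∂((volume.restrict (Ioc (0:ℝ) t')).prod (volume.restrict (Ioi (0:ℝ)))),
          p.1 ∈ Ioc (0:ℝ) t' := by
        rw [ae_iff]
        have hset : {p : ℝ × ℝ | ¬ p.1 ∈ Ioc (0:ℝ) t'} = (Ioc (0:ℝ) t')ᶜ ×ˢ (univ : Set ℝ) := by
          ext p; simp
        rw [hset, Measure.prod_prod, Measure.restrict_apply measurableSet_Ioc.compl]
        simp
      have hae2 : ∀ᵐ p : ℝ × ℝ
          ∂((volume.restrict (Ioc (0:ℝ) t')).prod (volume.restrict (Ioi (0:ℝ)))),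
          p.2 ∈ Ioi (0:ℝ) := by
        rw [ae_iff]
        have hset : {p : ℝ × ℝ | ¬ p.2 ∈ Ioi (0:ℝ)} = (univ : Set ℝ) ×ˢ (Ioi (0:ℝ))ᶜ := by
          ext p; simp
        rw [hset, Measure.prod_prod, Measure.restrict_apply measurableSet_Ioi.compl,
          compl_inter_self]
        simp
      have hae3 : ∀ᵐ p : ℝ × ℝ
          ∂((volume.restrict (Ioc (0:ℝ) t')).prod (volume.restrict (Ioi (0:ℝ)))),
          (p.2 ∈ Ioi (0:ℝ) → ∀ s, 0 ≤ s → v p.2 s = u p.2 s) := by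
        rw [ae_iff]
        have hset : {p : ℝ × ℝ | ¬ (p.2 ∈ Ioi (0:ℝ) → ∀ s, 0 ≤ s → v p.2 s = u p.2 s)}
            = (univ : Set ℝ) ×ˢ {y : ℝ | ¬ (y ∈ Ioi (0:ℝ) → ∀ s, 0 ≤ s → v y s = u y s)} := by
          ext p; simp
        rw [hset, Measure.prod_prod]
        have hz : volume.restrict (Ioi (0:ℝ))
            {y : ℝ | ¬ (y ∈ Ioi (0:ℝ) → ∀ s, 0 ≤ s → v y s = u y s)} = 0 :=
          le_antisymm (le_trans (Measure.restrict_le_self _) hEnull.le) zero_le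
        rw [hz, mul_zero]
      have h2 : Integrable (fun p : ℝ × ℝ => Km (x, p.2) * v p.2 p.1)
          ((volume.restrict (Ioc (0:ℝ) t')).prod (volume.restrict (Ioi (0:ℝ)))) := by
        refine hprodint.congr ?_
        filter_upwards [hae1, hae2, hae3] with p h1 h2 h3
        rw [hKmeq hx0 h2, h3 h2 p.1 h1.1.le]
      have hJ := h2.integral_prod_left
      obtain ⟨M, hM⟩ := (isCompact_Icc : IsCompact (Icc (0:ℝ) t')).exists_bound_of_continuousOn
        (hcont.mono Icc_subset_Ici_self)
      have hvb : ∀ᵐ τ ∂(volume.restrict (Ioc (0:ℝ) t')), ‖v x τ‖ ≤ M := by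
        filter_upwards [ae_restrict_mem measurableSet_Ioc] with τ hτ
        rw [hvx τ hτ.1.le]
        exact hM τ ⟨hτ.1.le, hτ.2⟩
      have hvxm : AEStronglyMeasurable (fun τ => v x τ) (volume.restrict (Ioc (0:ℝ) t')) :=
        (hvm.comp measurable_prodMk_left).aestronglyMeasurable
      have hmul := Integrable.bdd_mul hJ hvxm hvb
      refine hmul.congr (Eventually.of_forall fun τ => ?_)
      show v x τ * (∫ y in Ioi (0:ℝ), Km (x, y) * v y τ) = ∫ y, lcore ((x,τ),y)
      rw [hlsec τ]
      rw [show (fun y => Km (x,y) * v x τ * v y τ) = fun y => v x τ * (Km (x,y) * v y τ)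
        from funext fun y => by ring]
      rw [integral_const_mul]
    have hFint : IntervalIntegrable (fun τ => Fv x τ) volume 0 t' := by
      rw [intervalIntegrable_iff_integrableOn_Ioc_of_le ht0']
      have := (hGx_int.const_mul (1/2 : ℝ)).sub hLo_int
      exact this.congr (Eventually.of_forall fun τ => by simp only [Pi.sub_apply, hFvdef])
    have hF1 : IntervalIntegrable (fun τ => Fv x τ) volume 0 t := by
      refine hFint.mono_set ?_
      rw [uIcc_of_le ht, uIcc_of_le ht0']
      exact Icc_subset_Icc le_rfl htt'
    have hF2 : IntervalIntegrable (fun τ => Fv x τ) volume t t' := by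
      refine hFint.mono_set ?_
      rw [uIcc_of_le htt', uIcc_of_le ht0']
      exact Icc_subset_Icc ht le_rfl
    have hdiff : v x t' - v x t = ∫ τ in t..t', Fv x τ := by
      rw [hvx t' ht0', hvx t ht, hequ t' ht0', hequ t ht]
      have hadd := intervalIntegral.integral_add_adjacent_intervals hF1 hF2
      linarith [hadd]
    rw [hdiff, intervalIntegral.integral_of_le htt']
    exact enorm_integral_le_lintegral_enorm _
  -- final assembly
  have hlin : (∫⁻ x in Ioi (0:ℝ), ↑‖v x t' - v x t‖₊)
      ≤ ENNReal.ofReal (18*C*L^2*(t'-t)) := by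
    have h18 : (0:ℝ) ≤ 18*C*L^2 :=
      mul_nonneg (mul_nonneg (by norm_num) hC0.le) (sq_nonneg L)
    calc (∫⁻ x in Ioi (0:ℝ), ↑‖v x t' - v x t‖₊)
        ≤ ∫⁻ x in Ioi (0:ℝ), ∫⁻ τ in Ioc t t', ↑‖Fv x τ‖₊ := lintegral_mono_ae hstep1
      _ = ∫⁻ τ in Ioc t t', ∫⁻ x in Ioi (0:ℝ), ↑‖Fv x τ‖₊ :=
          lintegral_lintegral_swap (by exact hFvm.enorm.aemeasurable)
      _ ≤ ∫⁻ τ in Ioc t t', ENNReal.ofReal (18*C*L^2) := by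
          refine lintegral_mono_ae ?_
          filter_upwards [ae_restrict_mem measurableSet_Ioc] with τ hτ
          exact hPerTau τ (ht.trans hτ.1.le)
      _ = ENNReal.ofReal (18*C*L^2) * volume (Ioc t t') := setLIntegral_const _ _
      _ = ENNReal.ofReal (18*C*L^2*(t'-t)) := by
          rw [Real.volume_Ioc, ← ENNReal.ofReal_mul h18]
  have hcongr : (∫ x in Ioi (0:ℝ), |u x t' - u x t|)
      = ∫ x in Ioi (0:ℝ), |v x t' - v x t| := by
    refine integral_congr_ae ?_
    filter_upwards [hvu] with x hx
    rw [hx t' ht0', hx t ht]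
  rw [hcongr]
  have haesm : AEStronglyMeasurable (fun x => |v x t' - v x t|)
      (volume.restrict (Ioi (0:ℝ))) := by
    apply Measurable.aestronglyMeasurable
    exact ((hvm.comp (measurable_id.prodMk measurable_const)).sub
      (hvm.comp (measurable_id.prodMk measurable_const))).abs
  rw [integral_eq_lintegral_of_nonneg_ae (Eventually.of_forall fun x => abs_nonneg _) haesm]
  have heq2 : (∫⁻ x in Ioi (0:ℝ), ENNReal.ofReal |v x t' - v x t|)
      = ∫⁻ x in Ioi (0:ℝ), ↑‖v x t' - v x t‖₊ := by
    refine lintegral_congr fun x => ?_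
    rw [← enorm_eq_nnnorm, Real.enorm_eq_ofReal_abs]
  rw [heq2]
  refine ENNReal.toReal_le_of_le_ofReal ?_ hlin
  have h1 : (0:ℝ) ≤ t' - t := by linarith
  exact mul_nonneg (mul_nonneg (mul_nonneg (by norm_num) hC0.le) (sq_nonneg L)) h1


end AuxLipschitz

/-- `L¹` time-Lipschitz estimate for solutions of the coagulation equation:
`∫_0^∞ |u(x,t') − u(x,t)| dx ≤ 18 C L² |t' − t|`. -/
theorem L1_time_lipschitz
    (K : ℝ → ℝ → ℝ) (σ lam : ℝ) (hK : KernelHyp K 1 σ lam)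
    (u0 : ℝ → ℝ) (hu0 : InYplus u0)
    (L : ℝ) (hLpos : 0 < L)
    (u : ℝ → ℝ → ℝ) (hsol : IsSol K u0 u)
    (hbound : ∀ t : ℝ, 0 ≤ t → Ynorm (fun x => u x t) ≤ 2 * L)
    (C : ℝ) (hC : C = if lam ≤ 1 then 1 else 2 ^ (2 * lam - 2)) :
    ∀ t t' : ℝ, 0 ≤ t → 0 ≤ t' →
      (∫ x in Ioi (0:ℝ), |u x t' - u x t|) ≤ 18 * C * L ^ 2 * |t' - t| := by
  intro t t' ht ht'
  rcases le_total t t' with h | h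
  · have hkey := aux_key K σ lam hK u0 L hLpos u hsol hbound C hC t t' ht h
    rwa [abs_of_nonneg (by linarith : (0:ℝ) ≤ t' - t)]
  · have hkey := aux_key K σ lam hK u0 L hLpos u hsol hbound C hC t' t ht' h
    have habs : |t' - t| = t - t' := by
      rw [abs_sub_comm]
      exact abs_of_nonneg (by linarith)
    rw [habs]
    have hcomm : (∫ x in Ioi (0:ℝ), |u x t' - u x t|)
        = ∫ x in Ioi (0:ℝ), |u x t - u x t'| := by
      refine integral_congr_ae (Eventually.of_forall fun x => ?_)
      show |u x t' - u x t| = |u x t - u x t'|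
      rw [abs_sub_comm]
    rw [hcomm]
    exact hkey
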